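/- Let Z > 0, a ≥ 0, and define for π ∈ (0,1): Φ(π) = Z·π/(1-π) + a and Π(π) = Φ(π)/(1+Φ(π)). If g : [0,1] → ℝ is a C² function, then the function G(π) = (1-π)(1+Φ(π)) g(Π(π)) satisfies G''(π) = ((1-Π(π))/(1-π))³ Z² g''(Π(π)). In particular, if g is concave then G is concave on (0,1). -/

import Mathlib

open Set

/-- Auxiliary: a function antitone on `Icc 0 1` has nonpositive derivative inside. -/
lemma aux_anti_deriv_nonpos (f : ℝ → ℝ) (y d : ℝ) (hy : y ∈ Set.Ioo (0:ℝ) 1)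
    (hanti : AntitoneOn f (Set.Icc (0:ℝ) 1)) (hd : HasDerivAt f d y) : d ≤ 0 := by
  have htend : Filter.Tendsto (slope f y) (nhdsWithin y (Set.Ioi y)) (nhds d) :=
    (hasDerivAt_iff_tendsto_slope.mp hd).mono_left
      (nhdsWithin_mono _ (fun z hz => ne_of_gt hz))
  refine le_of_tendsto htend ?_
  filter_upwards [Ioo_mem_nhdsGT_of_mem ⟨le_refl y, hy.2⟩, self_mem_nhdsWithin] with z hz hz'
  have hyz : y < z := hz'
  have hfz : f z ≤ f y := hanti ⟨hy.1.le, hy.2.le⟩ ⟨(hy.1.trans hyz).le, hz.2.le⟩ hyz.le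
  rw [slope_def_field]
  apply div_nonpos_of_nonpos_of_nonneg <;> linarith

/-- with Z > 0, a ≥ 0, Φ(x) = Z·x/(1-x) + a, Π(x) = Φ(x)/(1+Φ(x)) and
g C², the function G(x) = (1-x)(1+Φ(x))g(Π(x)) satisfies
G''(x) = ((1-Π(x))/(1-x))³ Z² g''(Π(x)) on (0,1); in particular if g is concave then
G is concave on (0,1). -/
theorem stmt12 (Z a : ℝ) (hZ : 0 < Z) (ha : 0 ≤ a)
    (Φ Pi G g : ℝ → ℝ) (hgC2 : ContDiff ℝ 2 g)
    (hΦ : ∀ x : ℝ, Φ x = Z * x / (1 - x) + a)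
    (hPi : ∀ x : ℝ, Pi x = Φ x / (1 + Φ x))
    (hG : ∀ x : ℝ, G x = (1 - x) * (1 + Φ x) * g (Pi x)) :
    (∀ x ∈ Set.Ioo (0:ℝ) 1,
      deriv (deriv G) x = ((1 - Pi x) / (1 - x)) ^ 3 * Z ^ 2 * deriv (deriv g) (Pi x)) ∧
    (ConcaveOn ℝ (Set.Icc (0:ℝ) 1) g → ConcaveOn ℝ (Set.Ioo (0:ℝ) 1) G) := by
  have hg1 : Differentiable ℝ g := hgC2.differentiable two_ne_zero
  have hg2 : Differentiable ℝ (deriv g) := by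
    have h : ContDiff ℝ ((1:WithTop ℕ∞)+1) g := by norm_num; exact hgC2
    exact ((contDiff_succ_iff_deriv.mp h).2.2).differentiable one_ne_zero
  -- the linear functions
  set D : ℝ → ℝ := fun x => (1+a) + (Z-1-a) * x with hDdef
  set N : ℝ → ℝ := fun x => a + (Z-a) * x with hNdef
  set P : ℝ → ℝ := fun x => N x / D x with hPdef
  have hDcont : Continuous D := by
    simp only [hDdef]; fun_prop
  have hDpos : ∀ x ∈ Set.Ioo (0:ℝ) 1, 0 < D x := by
    intro x hx
    have h1 : D x = (1+a)*(1-x) + Z*x := by simp only [hDdef]; ring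
    nlinarith [hx.1, hx.2, mul_pos hZ hx.1]
  have hNpos : ∀ x ∈ Set.Ioo (0:ℝ) 1, 0 < N x := by
    intro x hx
    have h1 : N x = a*(1-x) + Z*x := by simp only [hNdef]; ring
    nlinarith [hx.1, hx.2, mul_pos hZ hx.1]
  have hDN : ∀ x, D x - N x = 1 - x := by intro x; simp only [hDdef, hNdef]; ring
  -- Pi = P on Ioo, and G = D * g ∘ P on Ioo
  have hPiP : ∀ x ∈ Set.Ioo (0:ℝ) 1, Pi x = P x := by
    intro x hx
    have hx1 : (1:ℝ) - x ≠ 0 := by have := hx.2; intro h; linarith [sub_eq_zero.mp h]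
    have hDx : D x ≠ 0 := (hDpos x hx).ne'
    have h1Φ : 1 + Φ x = D x / (1-x) := by
      rw [hΦ]; simp only [hDdef]; field_simp; ring
    have hΦN : Φ x = N x / (1-x) := by
      rw [hΦ]; simp only [hNdef]; field_simp; ring
    rw [hPi, h1Φ, hΦN, hPdef]
    field_simp
  have hGH : ∀ x ∈ Set.Ioo (0:ℝ) 1, G x = D x * g (P x) := by
    intro x hx
    have hx1 : (1:ℝ) - x ≠ 0 := by have := hx.2; intro h; linarith [sub_eq_zero.mp h]
    have h1Φ : 1 + Φ x = D x / (1-x) := by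
      rw [hΦ]; simp only [hDdef]; field_simp; ring
    rw [hG, h1Φ, hPiP x hx]
    field_simp
  -- derivative facts
  have hNder : ∀ x : ℝ, HasDerivAt N (Z - a) x := by
    intro x
    simpa [hNdef] using ((hasDerivAt_id x).const_mul (Z-a)).const_add a
  have hDder : ∀ x : ℝ, HasDerivAt D (Z-1-a) x := by
    intro x
    simpa [hDdef] using ((hasDerivAt_id x).const_mul (Z-1-a)).const_add (1+a)
  have hPder : ∀ x : ℝ, D x ≠ 0 → HasDerivAt P (Z / D x ^ 2) x := by
    intro x hx
    have h : HasDerivAt (fun y => N y / D y) _ x := (hNder x).div (hDder x) hx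
    convert h using 1
    simp only [hDdef, hNdef]
    field_simp
    ring
  set H1 : ℝ → ℝ := fun y => (Z-1-a) * g (P y) + Z * deriv g (P y) / D y with hH1def
  have hHder : ∀ x : ℝ, D x ≠ 0 →
      HasDerivAt (fun y => D y * g (P y)) (H1 x) x := by
    intro x hx
    have hgP : HasDerivAt (fun y => g (P y)) (deriv g (P x) * (Z / D x ^ 2)) x :=
      (hg1 (P x)).hasDerivAt.comp x (hPder x hx)
    have h : HasDerivAt (fun y => D y * g (P y)) _ x := (hDder x).mul hgP
    convert h using 1
    rw [hH1def]
    field_simp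
  have hH1der : ∀ x : ℝ, D x ≠ 0 →
      HasDerivAt H1 (Z^2 / D x ^ 3 * deriv (deriv g) (P x)) x := by
    intro x hx
    have hgP : HasDerivAt (fun y => g (P y)) (deriv g (P x) * (Z / D x ^ 2)) x :=
      (hg1 (P x)).hasDerivAt.comp x (hPder x hx)
    have hg'P : HasDerivAt (fun y => deriv g (P y))
        (deriv (deriv g) (P x) * (Z / D x ^ 2)) x :=
      (hg2 (P x)).hasDerivAt.comp x (hPder x hx)
    have h2 : HasDerivAt (fun y => Z * deriv g (P y) / D y)
        ((Z * (deriv (deriv g) (P x) * (Z / D x ^ 2)) * D x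
          - Z * deriv g (P x) * (Z-1-a)) / D x ^ 2) x :=
      (hg'P.const_mul Z).div (hDder x) hx
    have h : HasDerivAt (fun y => (Z-1-a) * g (P y) + Z * deriv g (P y) / D y) _ x :=
      (hgP.const_mul (Z-1-a)).add h2
    rw [hH1def]
    convert h using 1
    field_simp
    ring
  -- open set where D ≠ 0
  have hUopen : IsOpen {x : ℝ | D x ≠ 0} := isOpen_compl_singleton.preimage hDcont
  -- deriv G = H1 on Ioo
  have hGder : ∀ x ∈ Set.Ioo (0:ℝ) 1, HasDerivAt G (H1 x) x := by
    intro x hx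
    have hDx : D x ≠ 0 := (hDpos x hx).ne'
    have heq : G =ᶠ[nhds x] fun y => D y * g (P y) :=
      Filter.eventuallyEq_of_mem (isOpen_Ioo.mem_nhds hx) hGH
    exact (hHder x hDx).congr_of_eventuallyEq heq
  have hderivG : ∀ x ∈ Set.Ioo (0:ℝ) 1, deriv G x = H1 x := fun x hx => (hGder x hx).deriv
  have hG2der : ∀ x ∈ Set.Ioo (0:ℝ) 1,
      HasDerivAt (deriv G) (Z^2 / D x ^ 3 * deriv (deriv g) (P x)) x := by
    intro x hx
    have hDx : D x ≠ 0 := (hDpos x hx).ne'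
    have heq : deriv G =ᶠ[nhds x] H1 :=
      Filter.eventuallyEq_of_mem (isOpen_Ioo.mem_nhds hx) hderivG
    exact (hH1der x hDx).congr_of_eventuallyEq heq
  have hG2 : ∀ x ∈ Set.Ioo (0:ℝ) 1,
      deriv (deriv G) x = Z^2 / D x ^ 3 * deriv (deriv g) (P x) :=
    fun x hx => (hG2der x hx).deriv
  have hfrac : ∀ x ∈ Set.Ioo (0:ℝ) 1, (1 - Pi x) / (1 - x) = 1 / D x := by
    intro x hx
    have hx1 : (1:ℝ) - x ≠ 0 := by have := hx.2; intro h; linarith [sub_eq_zero.mp h]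
    have hDx : D x ≠ 0 := (hDpos x hx).ne'
    rw [hPiP x hx, hPdef]
    rw [div_eq_div_iff hx1 hDx]
    have := hDN x
    field_simp
    linarith [hDN x]
  have hPmem : ∀ x ∈ Set.Ioo (0:ℝ) 1, P x ∈ Set.Ioo (0:ℝ) 1 := by
    intro x hx
    have hD := hDpos x hx
    have hN := hNpos x hx
    have hND : N x < D x := by have := hDN x; have := hx.2; linarith
    constructor
    · exact div_pos hN hD
    · rw [div_lt_one hD]; exact hND
  constructor
  · intro x hx
    rw [hG2 x hx, hfrac x hx, hPiP x hx]
    have hDx : D x ≠ 0 := (hDpos x hx).ne'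
    field_simp
  · intro hgconc
    have hanti : AntitoneOn (deriv g) (Set.Icc (0:ℝ) 1) :=
      hgconc.antitoneOn_deriv (fun y _ => hg1 y)
    refine concaveOn_of_deriv2_nonpos (convex_Ioo 0 1) ?_ ?_ ?_ ?_
    · exact fun x hx => ((hGder x hx).continuousAt).continuousWithinAt
    · rw [interior_Ioo]
      exact fun x hx => ((hGder x hx).differentiableAt).differentiableWithinAt
    · rw [interior_Ioo]
      exact fun x hx => ((hG2der x hx).differentiableAt).differentiableWithinAt
    · rw [interior_Ioo]
      intro x hx
      have : deriv^[2] G x = deriv (deriv G) x := by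
        simp [Function.iterate_succ, Function.iterate_one]
      rw [this, hG2 x hx]
      have hg'' : deriv (deriv g) (P x) ≤ 0 :=
        aux_anti_deriv_nonpos (deriv g) (P x) _ (hPmem x hx) hanti
          (hg2 (P x)).hasDerivAt
      have hD3 : 0 < D x ^ 3 := pow_pos (hDpos x hx) 3
      have hZ2 : 0 < Z^2 := pow_pos hZ 2
      have : Z^2 / D x ^ 3 > 0 := div_pos hZ2 hD3
      exact mul_nonpos_of_nonneg_of_nonpos this.le hg''
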